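/- A λ-ring structure λ : R → 1 + t·R[[t]] (an additive-to-multiplicative homomorphism with λ_a(t) = 1 + a·t + O(t²)) on a commutative ring R determines a finitely determined power structure over R: every series A(t) ∈ 1 + t·R[[t]] can be written uniquely as Π_{i≥1} λ_{b_i}(t^i) for some b_i ∈ R, and setting (A(t))^m := Π_{i≥1} λ_{m·b_i}(t^i) yields an operation satisfying (A(t))^{m+n} = (A(t))^m · (A(t))^n and (A(t))^0 = 1, (A(t))^1 = A(t). -/

import Mathlib

/-- Substitution `t ↦ tⁱ` in a formal power series. -/
noncomputable def expandPS {R : Type*} [CommRing R] (i : ℕ) (f : PowerSeries R) :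
    PowerSeries R :=
  PowerSeries.mk fun n => if i ∣ n then PowerSeries.coeff (n / i) f else 0

section Aux
variable {R : Type} [CommRing R]

-- coeff N (g * h) = coeff N g when h = 1 + O(t^{N+1})
lemma coeff_mul_tail (N : ℕ) (g h : PowerSeries R) (h0 : PowerSeries.coeff 0 h = 1)
    (hk : ∀ k, 0 < k → k ≤ N → PowerSeries.coeff k h = 0) :
    PowerSeries.coeff N (g * h) = PowerSeries.coeff N g := by
  rw [PowerSeries.coeff_mul, Finset.sum_eq_single (N, 0)]
  · simp only [PowerSeries.coeff_zero_eq_constantCoeff] at h0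
    simp [h0]
  · rintro ⟨a, b⟩ hab hne
    rw [Finset.HasAntidiagonal.mem_antidiagonal] at hab
    have hb : 0 < b := by
      rcases Nat.eq_zero_or_pos b with rfl | hb
      · exact absurd (show ((a : ℕ), (0 : ℕ)) = (N, 0) by simp; omega) hne
      · exact hb
    rw [hk b hb (by omega), mul_zero]
  · intro habs
    exact absurd (Finset.HasAntidiagonal.mem_antidiagonal.mpr (by omega)) habs

-- coeff N (g * h) = coeff N g + coeff 0 g * coeff N h when h = 1 + 0·t + ... + c t^N + O(..)
lemma coeff_mul_top {N : ℕ} (hN : 1 ≤ N) (g h : PowerSeries R)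
    (h0 : PowerSeries.coeff 0 h = 1)
    (hk : ∀ k, 0 < k → k < N → PowerSeries.coeff k h = 0) :
    PowerSeries.coeff N (g * h) =
      PowerSeries.coeff N g + PowerSeries.coeff 0 g * PowerSeries.coeff N h := by
  rw [PowerSeries.coeff_mul]
  have hsub : ({((N : ℕ), (0 : ℕ)), (0, N)} : Finset (ℕ × ℕ)) ⊆ Finset.HasAntidiagonal.antidiagonal N := by
    intro p hp
    simp only [Finset.mem_insert, Finset.mem_singleton] at hp
    rcases hp with rfl | rfl <;> simp
  rw [← Finset.sum_subset hsub ?_]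
  · rw [Finset.sum_pair (by simp; omega)]
    rw [h0, mul_one]
  · rintro ⟨a, b⟩ hab hnab
    rw [Finset.HasAntidiagonal.mem_antidiagonal] at hab
    simp only [Finset.mem_insert, Finset.mem_singleton, Prod.mk.injEq, not_or, not_and] at hnab
    have hb : 0 < b := by omega
    have hbN : b < N := by omega
    rw [hk b hb hbN, mul_zero]



lemma coeff_expandPS (i n : ℕ) (f : PowerSeries R) :
    PowerSeries.coeff n (expandPS i f) =
      if i ∣ n then PowerSeries.coeff (n / i) f else 0 := by
  simp [expandPS]

lemma coeff_expandPS_zero (i : ℕ) (f : PowerSeries R) :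
    PowerSeries.coeff 0 (expandPS i f) = PowerSeries.coeff 0 f := by
  simp [coeff_expandPS]

lemma coeff_expandPS_not_dvd {i n : ℕ} (h : ¬ i ∣ n) (f : PowerSeries R) :
    PowerSeries.coeff n (expandPS i f) = 0 := by
  simp [coeff_expandPS, h]

lemma expandPS_mul {i : ℕ} (hi : 1 ≤ i) (f g : PowerSeries R) :
    expandPS i (f * g) = expandPS i f * expandPS i g := by
  ext n
  rw [PowerSeries.coeff_mul, coeff_expandPS]
  simp only [coeff_expandPS]
  by_cases h : i ∣ n
  · rw [if_pos h, PowerSeries.coeff_mul]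
    have hinj : Function.Injective (fun q : ℕ × ℕ => (i * q.1, i * q.2)) := by
      intro a b hab
      simp only [Prod.mk.injEq] at hab
      have h1 := Nat.eq_of_mul_eq_mul_left hi hab.1
      have h2 := Nat.eq_of_mul_eq_mul_left hi hab.2
      exact Prod.ext h1 h2
    set e : ℕ × ℕ ↪ ℕ × ℕ := ⟨fun q => (i * q.1, i * q.2), hinj⟩
    have hsub : (Finset.HasAntidiagonal.antidiagonal (n / i)).map e ⊆ Finset.HasAntidiagonal.antidiagonal n := by
      intro p hp
      simp only [Finset.mem_map, Finset.HasAntidiagonal.mem_antidiagonal] at hp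
      obtain ⟨q, hq, rfl⟩ := hp
      simp only [e, Function.Embedding.coeFn_mk, Finset.HasAntidiagonal.mem_antidiagonal]
      rw [← Nat.mul_add, hq, Nat.mul_div_cancel' h]
    rw [← Finset.sum_subset hsub ?_]
    · rw [Finset.sum_map]
      refine Finset.sum_congr rfl fun q hq => ?_
      simp only [e, Function.Embedding.coeFn_mk]
      rw [if_pos ⟨q.1, rfl⟩, if_pos ⟨q.2, rfl⟩,
        Nat.mul_div_cancel_left _ hi, Nat.mul_div_cancel_left _ hi]
    · intro p hp hnp
      rcases Classical.em (i ∣ p.1) with h1 | h1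
      · rcases Classical.em (i ∣ p.2) with h2 | h2
        · exfalso
          apply hnp
          rw [Finset.mem_map]
          obtain ⟨a, ha⟩ := h1
          obtain ⟨b, hb⟩ := h2
          rw [Finset.HasAntidiagonal.mem_antidiagonal] at hp
          refine ⟨(a, b), Finset.HasAntidiagonal.mem_antidiagonal.mpr ?_, ?_⟩
          · have : n = i * (a + b) := by rw [Nat.mul_add, ← ha, ← hb, hp]
            rw [this, Nat.mul_div_cancel_left _ hi]
          · simp only [e, Function.Embedding.coeFn_mk, ← ha, ← hb]
        · rw [if_neg h2, mul_zero]
      · rw [if_neg h1, zero_mul]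
  · rw [if_neg h]
    refine (Finset.sum_eq_zero fun p hp => ?_).symm
    rw [Finset.HasAntidiagonal.mem_antidiagonal] at hp
    by_cases h1 : i ∣ p.1
    · have h2 : ¬ i ∣ p.2 := fun h2 => h (hp ▸ Nat.dvd_add h1 h2)
      rw [if_neg h2, mul_zero]
    · rw [if_neg h1, zero_mul]



noncomputable def mkB {R : Type} [CommRing R] (l : R → PowerSeries R) (A : PowerSeries R) :
    ℕ → R
  | 0 => 0
  | N + 1 => PowerSeries.coeff (N + 1) A -
      PowerSeries.coeff (N + 1) (∏ i ∈ (Finset.Icc 1 N).attach,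
        expandPS i.1 (l (mkB l A i.1)))
  decreasing_by exact Nat.lt_succ_of_le (Finset.mem_Icc.mp i.2).2

lemma mkB_succ {R : Type} [CommRing R] (l : R → PowerSeries R) (A : PowerSeries R) (N : ℕ) :
    mkB l A (N + 1) = PowerSeries.coeff (N + 1) A -
      PowerSeries.coeff (N + 1) (∏ i ∈ Finset.Icc 1 N, expandPS i (l (mkB l A i))) := by
  rw [mkB, ← Finset.prod_attach (Finset.Icc 1 N) (fun i => expandPS i (l (mkB l A i)))]


section Main
variable {R : Type} [CommRing R] {l : R → PowerSeries R}

lemma coeff_zero_prod (l : R → PowerSeries R) (hconst : ∀ a, PowerSeries.coeff 0 (l a) = 1)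
    (c : ℕ → R) (s : Finset ℕ) :
    PowerSeries.coeff 0 (∏ i ∈ s, expandPS i (l (c i))) = 1 := by
  simp only [PowerSeries.coeff_zero_eq_constantCoeff, map_prod]
  refine Finset.prod_eq_one fun i _ => ?_
  rw [← PowerSeries.coeff_zero_eq_constantCoeff_apply, coeff_expandPS_zero, hconst]

/-- Stability: factors with index `> N` don't affect the `N`-th coefficient. -/
lemma coeff_prod_stable (hconst : ∀ a, PowerSeries.coeff 0 (l a) = 1)
    (c : ℕ → R) (N : ℕ) : ∀ M, N ≤ M →
    PowerSeries.coeff N (∏ i ∈ Finset.Icc 1 M, expandPS i (l (c i))) =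
      PowerSeries.coeff N (∏ i ∈ Finset.Icc 1 N, expandPS i (l (c i))) := by
  intro M
  induction M with
  | zero => intro h; have : N = 0 := by omega
            subst this; rfl
  | succ M ih =>
    intro h
    rcases Nat.lt_or_ge N (M + 1) with hlt | hge
    · have hNM : N ≤ M := by omega
      rw [Finset.prod_Icc_succ_top (by omega : 1 ≤ M + 1)]
      rw [coeff_mul_tail N _ _ ?_ ?_]
      · exact ih hNM
      · rw [coeff_expandPS_zero, hconst]
      · intro k hk hkN
        exact coeff_expandPS_not_dvd (Nat.not_dvd_of_pos_of_lt hk (by omega)) _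
    · have : N = M + 1 := by omega
      subst this; rfl

/-- The key recursion for the top coefficient. -/
lemma coeff_prod_top (hconst : ∀ a, PowerSeries.coeff 0 (l a) = 1)
    (hlin : ∀ a, PowerSeries.coeff 1 (l a) = a) (c : ℕ → R) (M : ℕ) :
    PowerSeries.coeff (M + 1) (∏ i ∈ Finset.Icc 1 (M + 1), expandPS i (l (c i))) =
      PowerSeries.coeff (M + 1) (∏ i ∈ Finset.Icc 1 M, expandPS i (l (c i))) + c (M + 1) := by
  rw [Finset.prod_Icc_succ_top (by omega : 1 ≤ M + 1)]
  rw [coeff_mul_top (by omega) _ _ ?_ ?_]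
  · rw [coeff_zero_prod l hconst]
    congr 1
    rw [coeff_expandPS, if_pos dvd_rfl, Nat.div_self (by omega), hlin, one_mul]
  · rw [coeff_expandPS_zero, hconst]
  · intro k hk hkM
    exact coeff_expandPS_not_dvd (Nat.not_dvd_of_pos_of_lt hk (by omega)) _

lemma mkB_spec (hconst : ∀ a, PowerSeries.coeff 0 (l a) = 1)
    (hlin : ∀ a, PowerSeries.coeff 1 (l a) = a) (A : PowerSeries R)
    (hA : PowerSeries.coeff 0 A = 1) (N : ℕ) :
    PowerSeries.coeff N A =
      PowerSeries.coeff N (∏ i ∈ Finset.Icc 1 N, expandPS i (l (mkB l A i))) := by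
  cases N with
  | zero =>
    rw [coeff_zero_prod l hconst, hA]
  | succ M =>
    rw [coeff_prod_top hconst hlin, mkB_succ]
    ring

lemma mkB_unique (hconst : ∀ a, PowerSeries.coeff 0 (l a) = 1)
    (hlin : ∀ a, PowerSeries.coeff 1 (l a) = a) (A : PowerSeries R)
    (b : ℕ → R) (hb0 : b 0 = 0)
    (hb : ∀ N, PowerSeries.coeff N A =
      PowerSeries.coeff N (∏ i ∈ Finset.Icc 1 N, expandPS i (l (b i)))) :
    b = mkB l A := by
  funext N
  induction N using Nat.strong_induction_on with
  | _ N ih =>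
    match N with
    | 0 => rw [hb0, mkB]
    | M + 1 =>
      have hprod : (∏ i ∈ Finset.Icc 1 M, expandPS i (l (b i))) =
          ∏ i ∈ Finset.Icc 1 M, expandPS i (l (mkB l A i)) := by
        refine Finset.prod_congr rfl fun i hi => ?_
        rw [ih i (by rw [Finset.mem_Icc] at hi; omega)]
      have h1 := hb (M + 1)
      rw [coeff_prod_top hconst hlin, hprod] at h1
      rw [mkB_succ]
      linear_combination -h1

lemma expandPS_one {i : ℕ} (hi : 1 ≤ i) : expandPS i (1 : PowerSeries R) = 1 := by
  ext n
  rw [coeff_expandPS]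
  by_cases h : i ∣ n
  · rw [if_pos h, PowerSeries.coeff_one, PowerSeries.coeff_one]
    by_cases hn : n = 0
    · subst hn; simp
    · have hni : n / i ≠ 0 := by
        obtain ⟨k, rfl⟩ := h
        rw [Nat.mul_div_cancel_left _ hi]
        rintro rfl
        simp at hn
      rw [if_neg hni, if_neg hn]
  · rw [if_neg h, PowerSeries.coeff_one, if_neg (by rintro rfl; exact h (dvd_zero i))]

lemma l_zero (hconst : ∀ a, PowerSeries.coeff 0 (l a) = 1)
    (hadd : ∀ a b, l (a + b) = l a * l b) : l 0 = 1 := by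
  have h := hadd 0 0
  rw [add_zero] at h
  have hu : IsUnit (l 0) := by
    rw [PowerSeries.isUnit_iff_constantCoeff, ← PowerSeries.coeff_zero_eq_constantCoeff_apply,
      hconst]
    exact isUnit_one
  exact hu.mul_left_cancel (by rw [mul_one, ← h])

end Main

/-- A λ-ring structure on `R` determines a (finitely determined) power structure over `R`:
every series with constant term 1 factors uniquely as `Π λ_{bᵢ}(tⁱ)` (the infinite product
understood coefficientwise: the `N`-th coefficient only involves factors with `i ≤ N`),
and `(A(t))^m := Π λ_{m bᵢ}(tⁱ)` satisfies `A^{m+n} = A^m A^n`, `A^0 = 1`, `A^1 = A`. -/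
theorem lambda_structure_gives_power_structure
    (R : Type) [CommRing R] (l : R → PowerSeries R)
    (hconst : ∀ a, PowerSeries.coeff 0 (l a) = 1)
    (hlin : ∀ a, PowerSeries.coeff 1 (l a) = a)
    (hadd : ∀ a b, l (a + b) = l a * l b) :
    (∀ A : PowerSeries R, PowerSeries.coeff 0 A = 1 →
      ∃! b : ℕ → R, b 0 = 0 ∧ ∀ N, PowerSeries.coeff N A =
        PowerSeries.coeff N (∏ i ∈ Finset.Icc 1 N, expandPS i (l (b i)))) ∧
    ∃ P : PowerSeries R → R → PowerSeries R,
      (∀ A m (b : ℕ → R), b 0 = 0 →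
        (∀ N, PowerSeries.coeff N A =
          PowerSeries.coeff N (∏ i ∈ Finset.Icc 1 N, expandPS i (l (b i)))) →
        ∀ N, PowerSeries.coeff N (P A m) =
          PowerSeries.coeff N (∏ i ∈ Finset.Icc 1 N, expandPS i (l (m * b i)))) ∧
      (∀ A, PowerSeries.coeff 0 A = 1 → ∀ m n : R, P A (m + n) = P A m * P A n) ∧
      (∀ A, PowerSeries.coeff 0 A = 1 → P A 0 = 1 ∧ P A 1 = A) := by
  classical
  constructor
  · intro A hA
    refine ⟨mkB l A, ⟨by rw [mkB], mkB_spec hconst hlin A hA⟩, ?_⟩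
    rintro b ⟨hb0, hb⟩
    exact mkB_unique hconst hlin A b hb0 hb
  · refine ⟨fun A m => PowerSeries.mk fun N =>
      PowerSeries.coeff N (∏ i ∈ Finset.Icc 1 N, expandPS i (l (m * mkB l A i))),
      ?_, ?_, ?_⟩
    · intro A m b hb0 hb N
      rw [PowerSeries.coeff_mk, mkB_unique hconst hlin A b hb0 hb]
    · intro A hA m n
      ext N
      rw [PowerSeries.coeff_mk, PowerSeries.coeff_mul]
      have step : ∀ p ∈ Finset.HasAntidiagonal.antidiagonal N,
          (PowerSeries.coeff p.1 (PowerSeries.mk fun K =>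
            PowerSeries.coeff K (∏ i ∈ Finset.Icc 1 K, expandPS i (l (m * mkB l A i))))) *
          (PowerSeries.coeff p.2 (PowerSeries.mk fun K =>
            PowerSeries.coeff K (∏ i ∈ Finset.Icc 1 K, expandPS i (l (n * mkB l A i))))) =
          PowerSeries.coeff p.1 (∏ i ∈ Finset.Icc 1 N, expandPS i (l (m * mkB l A i))) *
          PowerSeries.coeff p.2 (∏ i ∈ Finset.Icc 1 N, expandPS i (l (n * mkB l A i))) := by
        rintro ⟨j, k⟩ hp
        rw [Finset.HasAntidiagonal.mem_antidiagonal] at hp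
        rw [PowerSeries.coeff_mk, PowerSeries.coeff_mk,
          coeff_prod_stable hconst _ j N (by omega),
          coeff_prod_stable hconst _ k N (by omega)]
      rw [Finset.sum_congr rfl step, ← PowerSeries.coeff_mul, ← Finset.prod_mul_distrib]
      refine congrArg _ (Finset.prod_congr rfl fun i hi => ?_)
      rw [Finset.mem_Icc] at hi
      rw [← expandPS_mul hi.1, ← hadd, ← add_mul]
    · intro A hA
      constructor
      · ext N
        rw [PowerSeries.coeff_mk]
        have h1 : (∏ i ∈ Finset.Icc 1 N, expandPS i (l (0 * mkB l A i))) = 1 := by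
          refine Finset.prod_eq_one fun i hi => ?_
          rw [Finset.mem_Icc] at hi
          rw [zero_mul, l_zero hconst hadd, expandPS_one hi.1]
        rw [h1]
      · ext N
        rw [PowerSeries.coeff_mk]
        simp only [one_mul]
        exact (mkB_spec hconst hlin A hA N).symm
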